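/- Let S be a collection of strings and let M = {{x_1,y_1},…,{x_h,y_h}} be a matching of pairs of distinct strings of S with |overlap(x_i, y_i)| > 0 for each i. If h ≥ r, then S has a superstring of length at most (Σ_{z∈S}|z|) − r. -/

import Mathlib

open List

variable {α : Type*} [DecidableEq α]

/-- The length of the longest suffix of `s` that is also a prefix of `t`. -/
def ovLen (s t : List α) : ℕ :=
  Nat.findGreatest (fun i => s.drop (s.length - i) = t.take i) (min s.length t.length)

lemma ovLen_spec (s t : List α) :
    s.drop (s.length - ovLen s t) = t.take (ovLen s t) := by
  exact Nat.findGreatest_spec (P := fun i => s.drop (s.length - i) = t.take i)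
    (m := 0) (Nat.zero_le _) (by simp)

lemma ovLen_le_left (s t : List α) : ovLen s t ≤ s.length :=
  le_trans (Nat.findGreatest_le _) (min_le_left _ _)

/-- Merge `s` and `t` along their maximal overlap. -/
def mergeOv (s t : List α) : List α :=
  s.take (s.length - ovLen s t) ++ t

lemma prefix_mergeOv (s t : List α) : s <+: mergeOv s t := by
  have h := ovLen_spec s t
  refine ⟨t.drop (ovLen s t), ?_⟩
  simp only [mergeOv, append_assoc]
  nth_rewrite 1 [← take_append_drop (s.length - ovLen s t) s]
  rw [h, append_assoc, take_append_drop]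

lemma suffix_mergeOv (s t : List α) : t <:+ mergeOv s t :=
  suffix_append _ _

lemma length_mergeOv (s t : List α) (h : 0 < ovLen s t) :
    length (mergeOv s t) + 1 ≤ s.length + t.length := by
  have h1 := ovLen_le_left s t
  simp only [mergeOv, length_append, length_take]
  omega

lemma erase_cons_head' {β : Type*} [DecidableEq β] (a : β) (l : List β) :
    (a :: l).erase a = l := by
  simp [List.erase_cons]

lemma mem_erase_of_ne' {β : Type*} [DecidableEq β] {a b : β} {l : List β} (h : a ≠ b)
    (ha : a ∈ l) : a ∈ l.erase b := by
  rw [List.mem_erase_of_ne h]; exact ha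

/-- if M = {{x_1,y_1},…,{x_h,y_h}} is a matching of pairs of distinct
strings of S with |overlap(x_i,y_i)| > 0 for each i and h ≥ r, then S has a
superstring of length at most (Σ_{z∈S}|z|) − r. -/
theorem superstring_of_matching (S : List (List α)) (M : List (List α × List α)) (r : ℕ)
    (hsub : (M.flatMap fun p => [p.1, p.2]).Subperm S)
    (hov : ∀ p ∈ M, 0 < ovLen p.1 p.2)
    (hM : r ≤ M.length) :
    ∃ s : List α, (∀ x ∈ S, x <:+: s) ∧
      s.length + r ≤ (S.map List.length).sum := by
  induction M generalizing S r with
  | nil =>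
    obtain rfl : r = 0 := by simpa using hM
    exact ⟨S.flatten, fun x hx => infix_of_mem_flatten hx, by simp [length_flatten]⟩
  | cons p M ih =>
    simp only [flatMap_cons, cons_append, nil_append] at hsub
    have h1 : p.1 ∈ S := hsub.subset (by simp)
    have hsub1 := hsub.erase p.1
    rw [List.erase_cons_head] at hsub1
    have h2 := hsub1.subset mem_cons_self
    have hsub2 := hsub1.erase p.2
    rw [List.erase_cons_head] at hsub2
    obtain ⟨s', hs1, hs2⟩ := ih _ (r - 1) hsub2
      (fun q hq => hov q (mem_cons_of_mem _ hq)) (by simp at hM; omega)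
    refine ⟨mergeOv p.1 p.2 ++ s', fun x hx => ?_, ?_⟩
    · by_cases e1 : x = p.1
      · exact e1 ▸ ((prefix_mergeOv p.1 p.2).trans (prefix_append _ _)).isInfix
      by_cases e2 : x = p.2
      · exact e2 ▸ (((suffix_mergeOv p.1 p.2).isInfix).trans (prefix_append _ _).isInfix)
      · exact (hs1 x ((List.mem_erase_of_ne e2).2 ((List.mem_erase_of_ne e1).2 hx))).trans
          (suffix_append _ _).isInfix
    · have hlm := length_mergeOv p.1 p.2 (hov p mem_cons_self)
      have e1 := ((perm_cons_erase h1).map List.length).sum_eq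
      simp only [map_cons, sum_cons] at e1
      have e2 := ((perm_cons_erase h2).map List.length).sum_eq
      simp only [map_cons, sum_cons] at e2
      simp only [length_append]
      omega
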